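/- Suppose 0 ≤ γ < 1, c ≤ γ y², and λ ≥ (γ/(1-γ)) ‖x‖². Then the (d+1)×(d+1) block matrix [[y² - c, y xᵀ],[x y, λ I + x xᵀ]] is positive semidefinite. -/

import Mathlib

open Matrix

theorem block_matrix_posSemidef {d : ℕ}
    (x : Fin d → ℝ) (y c γ lam : ℝ)
    (hγ0 : 0 ≤ γ) (hγ1 : γ < 1)
    (hc : c ≤ γ * y ^ 2)
    (hlam : lam ≥ γ / (1 - γ) * ∑ i, x i ^ 2) :
    (fromBlocks
      (Matrix.of fun (_ : Unit) (_ : Unit) => y ^ 2 - c)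
      (Matrix.of fun (_ : Unit) i => y * x i)
      (Matrix.of fun i (_ : Unit) => x i * y)
      (lam • (1 : Matrix (Fin d) (Fin d) ℝ) + vecMulVec x x)).PosSemidef := by
  have h1γ : (0:ℝ) < 1 - γ := by linarith
  refine posSemidef_iff_dotProduct_mulVec.mpr ⟨?_, ?_⟩
  · ext (i|i) (j|j) <;>
      simp [Matrix.conjTranspose_apply, fromBlocks, vecMulVec_apply, Matrix.one_apply,
        mul_comm, eq_comm]
  · intro v
    simp only [star_trivial, dotProduct, mulVec, fromBlocks, Fintype.sum_sum_type,
      Sum.elim_inl, Sum.elim_inr, of_apply, Matrix.add_apply, Matrix.smul_apply,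
      Matrix.one_apply, vecMulVec_apply, smul_eq_mul]
    set u : Fin d → ℝ := fun i => v (Sum.inr i) with hu
    set a := v (Sum.inl ()) with ha
    simp only [Finset.univ_unique, Finset.sum_singleton]
    have h2 : ∀ i, (∑ j, ((lam * if i = j then 1 else 0) + x i * x j) * v (Sum.inr j))
        = lam * u i + x i * ∑ j, x j * u j := by
      intro i
      simp [add_mul, ite_mul, Finset.sum_add_distrib, Finset.mul_sum, mul_assoc, hu]
    simp only [h2]
    change 0 ≤ a * ((y ^ 2 - c) * a + ∑ i, y * x i * u i) +
      ∑ i, u i * (x i * y * a + (lam * u i + x i * ∑ j, x j * u j))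
    have e1 : ∀ i, u i * (x i * y * a + (lam * u i + x i * ∑ j, x j * u j))
        = (x i * u i) * (y * a) + lam * (u i ^ 2) + (x i * u i) * ∑ j, x j * u j := by
      intro i; ring
    simp only [e1, Finset.sum_add_distrib, ← Finset.sum_mul, ← Finset.mul_sum]
    set s := ∑ j, x j * u j with hs
    have hyx : (∑ i, y * x i * u i) = y * s := by
      rw [hs, Finset.mul_sum]; exact Finset.sum_congr rfl fun i _ => by ring
    rw [hyx]
    have hcs : s ^ 2 ≤ (∑ i, x i ^ 2) * ∑ i, u i ^ 2 :=
      Finset.sum_mul_sq_le_sq_mul_sq Finset.univ x u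
    have hSu : (0:ℝ) ≤ ∑ i, u i ^ 2 := Finset.sum_nonneg fun i _ => sq_nonneg _
    have h3 : γ * (∑ i, x i ^ 2) ≤ (1 - γ) * lam := by
      have h := mul_le_mul_of_nonneg_right hlam h1γ.le
      have heq : γ / (1 - γ) * (∑ i, x i ^ 2) * (1 - γ) = γ * (∑ i, x i ^ 2) := by
        field_simp
      nlinarith [h]
    have t2 : 0 ≤ γ * ((∑ i, x i ^ 2) * (∑ i, u i ^ 2) - s ^ 2) :=
      mul_nonneg hγ0 (sub_nonneg.mpr hcs)
    have t3 : 0 ≤ ((1 - γ) * lam - γ * (∑ i, x i ^ 2)) * (∑ i, u i ^ 2) :=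
      mul_nonneg (sub_nonneg.mpr h3) hSu
    have t4 : 0 ≤ (1 - γ) * ((γ * y ^ 2 - c) * a ^ 2) :=
      mul_nonneg h1γ.le (mul_nonneg (sub_nonneg.mpr hc) (sq_nonneg a))
    nlinarith [sq_nonneg ((1 - γ) * y * a + s), t2, t3, t4, h1γ]
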